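/- Let a > 0, b > 0, Te ∈ ℝ, D > 0. Suppose P : [0,D] → ℝ is continuous, monotone nondecreasing, and P(0) ≥ 0, and suppose T : [0,D] → ℝ is differentiable with T'(t) = a·P(t) − b·(T(t) − Te) on [0,D] and T(0) = Te. Then T is monotone nondecreasing on [0,D]. -/

import Mathlib

open MeasureTheory Real Set

theorem stmt_6 (a b Te D : ℝ) (ha : 0 < a) (hb : 0 < b) (hD : 0 < D)
    (P T : ℝ → ℝ)
    (hPc : ContinuousOn P (Set.Icc 0 D))
    (hPm : MonotoneOn P (Set.Icc 0 D))
    (hP0 : 0 ≤ P 0)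
    (hT : ∀ t ∈ Set.Icc (0:ℝ) D, HasDerivAt T (a * P t - b * (T t - Te)) t)
    (h0 : T 0 = Te) :
    MonotoneOn T (Set.Icc 0 D) := by
  set g : ℝ → ℝ := fun s => Real.exp (b*s) * (T s - Te) with hgdef
  have hg' : ∀ s ∈ Set.Icc (0:ℝ) D, HasDerivAt g (Real.exp (b*s) * (a * P s)) s := by
    intro s hs
    have h2 : HasDerivAt (fun u : ℝ => Real.exp (b*u)) (Real.exp (b*s) * b) s := by
      simpa using (((hasDerivAt_id s).const_mul b).exp)
    have h3 : HasDerivAt (fun u => Real.exp (b*u) * (T u - Te)) _ s := h2.mul ((hT s hs).sub_const Te)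
    convert h3 using 1
    ring
  -- key inequality
  have key : ∀ t ∈ Set.Icc (0:ℝ) D, b * (T t - Te) ≤ a * P t := by
    intro t ht
    obtain ⟨ht0, htD⟩ := ht
    have hsub : Set.Icc (0:ℝ) t ⊆ Set.Icc 0 D := Set.Icc_subset_Icc le_rfl htD
    have hPt0 : 0 ≤ P t := hP0.trans (hPm ⟨le_rfl, hD.le⟩ ⟨ht0, htD⟩ ht0)
    have hcont1 : ContinuousOn (fun s => Real.exp (b*s) * (a * P s)) (Set.Icc 0 t) :=
      ((Real.continuous_exp.comp (continuous_const.mul continuous_id)).continuousOn).mul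
        (continuousOn_const.mul (hPc.mono hsub))
    have hint1 : IntervalIntegrable (fun s => Real.exp (b*s) * (a * P s)) volume 0 t := by
      apply ContinuousOn.intervalIntegrable
      rwa [Set.uIcc_of_le ht0]
    have hint2 : IntervalIntegrable (fun s => Real.exp (b*s) * (a * P t)) volume 0 t := by
      apply ContinuousOn.intervalIntegrable
      exact ((Real.continuous_exp.comp (continuous_const.mul continuous_id)).mul
        continuous_const).continuousOn
    have hftc : ∫ s in (0:ℝ)..t, Real.exp (b*s) * (a * P s) = g t - g 0 := by
      apply intervalIntegral.integral_eq_sub_of_hasDerivAt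
      · intro s hs
        rw [Set.uIcc_of_le ht0] at hs
        exact hg' s (hsub hs)
      · exact hint1
    have hg0 : g 0 = 0 := by simp [hgdef, h0]
    have hmono : ∫ s in (0:ℝ)..t, Real.exp (b*s) * (a * P s)
        ≤ ∫ s in (0:ℝ)..t, Real.exp (b*s) * (a * P t) := by
      apply intervalIntegral.integral_mono_on ht0 hint1 hint2
      intro s hs
      have hPs : P s ≤ P t := hPm (hsub hs) ⟨ht0, htD⟩ hs.2
      exact mul_le_mul_of_nonneg_left (mul_le_mul_of_nonneg_left hPs ha.le)
        (Real.exp_pos (b*s)).le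
    have hcomp : ∫ s in (0:ℝ)..t, Real.exp (b*s) * (a * P t)
        = (a * P t) * ((Real.exp (b*t) - 1) / b) := by
      rw [intervalIntegral.integral_mul_const, intervalIntegral.integral_comp_mul_left
        (fun x => Real.exp x) (ne_of_gt hb)]
      simp [integral_exp]
      field_simp
    have hE1 : (1:ℝ) ≤ Real.exp (b*t) := by
      rw [show (1:ℝ) = Real.exp 0 by simp]
      exact Real.exp_le_exp.mpr (by positivity)
    have hgt : Real.exp (b*t) * (T t - Te) ≤ (a * P t) * ((Real.exp (b*t) - 1) / b) := by
      have : g t = ∫ s in (0:ℝ)..t, Real.exp (b*s) * (a * P s) := by rw [hftc, hg0]; ring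
      calc Real.exp (b*t) * (T t - Te) = g t := rfl
        _ ≤ _ := by rw [this]; exact hmono.trans (le_of_eq hcomp)
    have haPt : 0 ≤ a * P t := by positivity
    have hEpos := Real.exp_pos (b*t)
    have hgt2 : Real.exp (b*t) * (T t - Te) * b ≤ a * P t * (Real.exp (b*t) - 1) := by
      have h4 := mul_le_mul_of_nonneg_right hgt hb.le
      have h5 : a * P t * ((Real.exp (b*t) - 1) / b) * b = a * P t * (Real.exp (b*t) - 1) := by
        field_simp
      linarith [h4, h5.le, h5.ge]
    nlinarith [hgt2, hEpos, haPt, mul_pos hEpos hb]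
  -- conclude monotonicity
  have hdiff : ∀ x ∈ Set.Icc (0:ℝ) D, DifferentiableAt ℝ T x :=
    fun x hx => (hT x hx).differentiableAt
  apply monotoneOn_of_deriv_nonneg (convex_Icc 0 D)
  · exact fun x hx => (hdiff x hx).continuousAt.continuousWithinAt
  · intro x hx
    rw [interior_Icc] at hx
    exact ((hdiff x ⟨hx.1.le, hx.2.le⟩).differentiableWithinAt)
  · intro x hx
    rw [interior_Icc] at hx
    have hx' : x ∈ Set.Icc (0:ℝ) D := ⟨hx.1.le, hx.2.le⟩
    rw [(hT x hx').deriv]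
    have := key x hx'
    linarith
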